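/- Let a₁ := α_{00}^{01} > 0, a₂ := α_{00}^{10} > 0, b₁ := α_{01}^{11} > 0, b₂ := α_{10}^{11} > 0 and β > 0, and let μ₁, μ₂, μ₃, μ₄ > 0 satisfy the balance equations (a₁ + a₂) μ₁ = β μ₂ + β μ₃, (b₁ + β) μ₂ = a₁ μ₁ + β μ₄, (b₂ + β) μ₃ = a₂ μ₁ + β μ₄, and 2β μ₄ = b₁ μ₂ + b₂ μ₃. Then for every λ₁ > 0 the 4×4 real matrix M₁(λ₁) = [[−a₂ − a₁ − λ₁, β μ₂/μ₁, β μ₃/μ₁, 0], [a₁ μ₁/μ₂, −b₁ − β − λ₁, 0, β μ₄/μ₂], [0, 0, −b₂ − β − λ₁, β μ₄/μ₃], [0, 0, b₂ μ₃/μ₄, −2β − λ₁]] is invertible. -/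

import Mathlib

/-- Invertibility of the matrix `M₁(λ₁)` of the linear system satisfied by the partial
Laplace transforms of the invariant measure of the two-neuron process, for every `λ₁ > 0`,
given that `(μ₁,μ₂,μ₃,μ₄)` satisfies the balance equations of the jump chain. -/
theorem laplace_system_matrix_invertible
    (a₁ a₂ b₁ b₂ β : ℝ)
    (ha₁ : 0 < a₁) (ha₂ : 0 < a₂) (hb₁ : 0 < b₁) (hb₂ : 0 < b₂) (hβ : 0 < β)
    (μ₁ μ₂ μ₃ μ₄ : ℝ)
    (hμ₁ : 0 < μ₁) (hμ₂ : 0 < μ₂) (hμ₃ : 0 < μ₃) (hμ₄ : 0 < μ₄)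
    (hbal₁ : (a₁ + a₂) * μ₁ = β * μ₂ + β * μ₃)
    (hbal₂ : (b₁ + β) * μ₂ = a₁ * μ₁ + β * μ₄)
    (hbal₃ : (b₂ + β) * μ₃ = a₂ * μ₁ + β * μ₄)
    (hbal₄ : 2 * β * μ₄ = b₁ * μ₂ + b₂ * μ₃) :
    ∀ lam₁ : ℝ, 0 < lam₁ →
      IsUnit (!![-a₂ - a₁ - lam₁, β * μ₂ / μ₁, β * μ₃ / μ₁, 0;
                 a₁ * μ₁ / μ₂, -b₁ - β - lam₁, 0, β * μ₄ / μ₂;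
                 0, 0, -b₂ - β - lam₁, β * μ₄ / μ₃;
                 0, 0, b₂ * μ₃ / μ₄, -2 * β - lam₁] : Matrix (Fin 4) (Fin 4) ℝ) := by
  intro lam₁ hlam
  apply (Matrix.isUnit_iff_isUnit_det _).mpr
  rw [isUnit_iff_ne_zero]
  have hdet : (!![-a₂ - a₁ - lam₁, β * μ₂ / μ₁, β * μ₃ / μ₁, 0;
                 a₁ * μ₁ / μ₂, -b₁ - β - lam₁, 0, β * μ₄ / μ₂;
                 0, 0, -b₂ - β - lam₁, β * μ₄ / μ₃;
                 0, 0, b₂ * μ₃ / μ₄, -2 * β - lam₁] : Matrix (Fin 4) (Fin 4) ℝ).det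
      = ((a₂ + a₁ + lam₁) * (b₁ + β + lam₁) - β * a₁) *
        ((b₂ + β + lam₁) * (2 * β + lam₁) - β * b₂) := by
    simp [Matrix.det_succ_row_zero, Fin.sum_univ_succ, Fin.succAbove]
    field_simp
    ring
  rw [hdet]
  have h1 : 0 < (a₂ + a₁ + lam₁) * (b₁ + β + lam₁) - β * a₁ := by nlinarith
  have h2 : 0 < (b₂ + β + lam₁) * (2 * β + lam₁) - β * b₂ := by nlinarith
  positivity
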